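/- Let S be a symmetric n×n real matrix such that I−S has an eigenvalue μ with |μ| > 1. Then there exists Y ∈ ℝⁿ such that, with Rₖ = (I−S)^k Y, b̂ₖ = −(I−S)^{k−1} S Y and m̂ₖ = (I − (I−S)^k) Y, one has ‖Rₖ‖ → ∞, ‖b̂ₖ‖ → ∞ and ‖m̂ₖ‖ → ∞ as k → ∞. In particular ‖(I−S)^k‖_op → ∞. -/

import Mathlib

open Matrix Filter

private lemma pow_mulVec_eig {n : ℕ} (A : Matrix (Fin n) (Fin n) ℝ) (v : Fin n → ℝ) (μ : ℝ)
    (h : A.mulVec v = μ • v) (k : ℕ) : (A ^ k).mulVec v = (μ ^ k) • v := by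
  induction k with
  | zero => simp [Matrix.one_mulVec]
  | succ k ih =>
      rw [pow_succ, ← Matrix.mulVec_mulVec, h, Matrix.mulVec_smul, ih, smul_smul, pow_succ]
      ring_nf

/-- **Divergence of boosting when `I−S` has an eigenvalue of modulus larger than one.**
If `S` is symmetric and `I−S` has a (real) eigenvalue `μ` with `|μ| > 1`, then there is a
`Y ∈ ℝⁿ` for which the residuals `Rₖ = (I−S)^k Y`, the estimated bias
`b̂ₖ = −(I−S)^{k−1} S Y` and the boosted smoother `m̂ₖ = (I − (I−S)^k) Y` all blow up
in Euclidean norm; in particular the operator norm of `(I−S)^k` tends to infinity. -/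
theorem divergence_of_boosting_eigenvalue_gt_one
    {n : ℕ} (S : Matrix (Fin n) (Fin n) ℝ) (hS : S.IsSymm)
    (μ : ℝ) (hμ : 1 < |μ|)
    (hEig : ∃ v : Fin n → ℝ, v ≠ 0 ∧
      ((1 : Matrix (Fin n) (Fin n) ℝ) - S).mulVec v = μ • v) :
    ∃ Y : Fin n → ℝ,
      Tendsto (fun k : ℕ =>
          ‖(WithLp.equiv 2 (Fin n → ℝ)).symm
            ((((1 : Matrix (Fin n) (Fin n) ℝ) - S) ^ k).mulVec Y)‖) atTop atTop ∧
      Tendsto (fun k : ℕ =>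
          ‖(WithLp.equiv 2 (Fin n → ℝ)).symm
            (-(((((1 : Matrix (Fin n) (Fin n) ℝ) - S) ^ (k - 1)) * S).mulVec Y))‖) atTop atTop ∧
      Tendsto (fun k : ℕ =>
          ‖(WithLp.equiv 2 (Fin n → ℝ)).symm
            (((1 : Matrix (Fin n) (Fin n) ℝ) -
              ((1 : Matrix (Fin n) (Fin n) ℝ) - S) ^ k).mulVec Y)‖) atTop atTop ∧
      Tendsto (fun k : ℕ =>
          ‖Matrix.toEuclideanCLM (𝕜 := ℝ) (n := Fin n)
            ((((1 : Matrix (Fin n) (Fin n) ℝ) - S) ^ k))‖) atTop atTop := by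
  obtain ⟨v, hv, hev⟩ := hEig
  set A : Matrix (Fin n) (Fin n) ℝ := (1 : Matrix (Fin n) (Fin n) ℝ) - S with hA
  refine ⟨v, ?_, ?_, ?_, ?_⟩
  · -- residuals
    have h1 : ∀ k : ℕ, ‖(WithLp.equiv 2 (Fin n → ℝ)).symm ((A ^ k).mulVec v)‖
        = |μ| ^ k * ‖(WithLp.equiv 2 (Fin n → ℝ)).symm v‖ := by
      intro k
      rw [pow_mulVec_eig A v μ hev k]
      have : (WithLp.equiv 2 (Fin n → ℝ)).symm ((μ ^ k) • v)
          = (μ ^ k) • (WithLp.equiv 2 (Fin n → ℝ)).symm v := rfl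
      rw [this, norm_smul, Real.norm_eq_abs, abs_pow]
    simp only [h1]
    have hC : 0 < ‖(WithLp.equiv 2 (Fin n → ℝ)).symm v‖ := by
      rw [norm_pos_iff]
      simpa using hv
    exact (tendsto_pow_atTop_atTop_of_one_lt hμ).atTop_mul_const hC
  · -- bias
    have hSv : S.mulVec v = (1 - μ) • v := by
      have : A.mulVec v = (1 : Matrix (Fin n) (Fin n) ℝ).mulVec v - S.mulVec v := by
        rw [hA, Matrix.sub_mulVec]
      rw [hev, Matrix.one_mulVec] at this
      have := this.symm
      rw [sub_smul, one_smul]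
      linear_combination (norm := module) -this
    have h2 : ∀ k : ℕ, ‖(WithLp.equiv 2 (Fin n → ℝ)).symm (-(((A ^ (k - 1)) * S).mulVec v))‖
        = (|1 - μ| * ‖(WithLp.equiv 2 (Fin n → ℝ)).symm v‖) * |μ| ^ (k - 1) := by
      intro k
      rw [← Matrix.mulVec_mulVec, hSv, Matrix.mulVec_smul, pow_mulVec_eig A v μ hev,
        smul_smul]
      have : (WithLp.equiv 2 (Fin n → ℝ)).symm (-(((1 - μ) * μ ^ (k - 1)) • v))
          = (-((1 - μ) * μ ^ (k - 1))) • (WithLp.equiv 2 (Fin n → ℝ)).symm v := by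
        rw [← neg_smul]; rfl
      rw [this, norm_smul, Real.norm_eq_abs, abs_neg, abs_mul, abs_pow]
      ring
    simp only [h2]
    have hC : 0 < |1 - μ| * ‖(WithLp.equiv 2 (Fin n → ℝ)).symm v‖ := by
      apply mul_pos
      · rw [abs_pos, sub_ne_zero]
        intro h; rw [← h] at hμ; simp at hμ
      · rw [norm_pos_iff]; simpa using hv
    have := ((tendsto_pow_atTop_atTop_of_one_lt hμ).comp
      (tendsto_sub_atTop_nat 1)).const_mul_atTop hC
    exact this
  · -- boosted smoother
    have h3 : ∀ k : ℕ, ‖(WithLp.equiv 2 (Fin n → ℝ)).symm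
        (((1 : Matrix (Fin n) (Fin n) ℝ) - A ^ k).mulVec v)‖
        = |1 - μ ^ k| * ‖(WithLp.equiv 2 (Fin n → ℝ)).symm v‖ := by
      intro k
      rw [Matrix.sub_mulVec, Matrix.one_mulVec, pow_mulVec_eig A v μ hev]
      have : (WithLp.equiv 2 (Fin n → ℝ)).symm (v - (μ ^ k) • v)
          = (1 - μ ^ k) • (WithLp.equiv 2 (Fin n → ℝ)).symm v := by
        rw [sub_smul, one_smul]; rfl
      rw [this, norm_smul, Real.norm_eq_abs]
    simp only [h3]
    have hC : 0 < ‖(WithLp.equiv 2 (Fin n → ℝ)).symm v‖ := by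
      rw [norm_pos_iff]; simpa using hv
    have hlow : Tendsto (fun k : ℕ => (|μ| ^ k - 1) * ‖(WithLp.equiv 2 (Fin n → ℝ)).symm v‖)
        atTop atTop := by
      exact (tendsto_atTop_add_const_right atTop (-1)
        (tendsto_pow_atTop_atTop_of_one_lt hμ)).atTop_mul_const hC
    refine tendsto_atTop_mono (fun k => ?_) hlow
    apply mul_le_mul_of_nonneg_right _ (norm_nonneg _)
    have : |μ| ^ k - 1 ≤ |μ ^ k| - |(1 : ℝ)| := by rw [abs_pow, abs_one]
    refine this.trans ?_
    calc |μ ^ k| - |(1:ℝ)| ≤ |μ ^ k - 1| := abs_sub_abs_le_abs_sub _ _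
      _ = |1 - μ ^ k| := abs_sub_comm _ _
  · -- operator norm
    have hC : 0 < ‖(WithLp.equiv 2 (Fin n → ℝ)).symm v‖ := by
      rw [norm_pos_iff]; simpa using hv
    have hlow : Tendsto (fun k : ℕ => |μ| ^ k) atTop atTop :=
      tendsto_pow_atTop_atTop_of_one_lt hμ
    refine tendsto_atTop_mono (fun k => ?_) hlow
    have happ : Matrix.toEuclideanCLM (𝕜 := ℝ) (n := Fin n) (A ^ k)
        ((WithLp.equiv 2 (Fin n → ℝ)).symm v)
        = (WithLp.equiv 2 (Fin n → ℝ)).symm (Matrix.toLin' (A ^ k) v) := rfl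
    have hle := (Matrix.toEuclideanCLM (𝕜 := ℝ) (n := Fin n) (A ^ k)).le_opNorm
      ((WithLp.equiv 2 (Fin n → ℝ)).symm v)
    rw [happ, Matrix.toLin'_apply, pow_mulVec_eig A v μ hev] at hle
    have hnorm : ‖(WithLp.equiv 2 (Fin n → ℝ)).symm ((μ ^ k) • v)‖
        = |μ| ^ k * ‖(WithLp.equiv 2 (Fin n → ℝ)).symm v‖ := by
      have : (WithLp.equiv 2 (Fin n → ℝ)).symm ((μ ^ k) • v)
          = (μ ^ k) • (WithLp.equiv 2 (Fin n → ℝ)).symm v := rfl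
      rw [this, norm_smul, Real.norm_eq_abs, abs_pow]
    rw [hnorm] at hle
    exact le_of_mul_le_mul_right hle hC
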